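/- Let R be a commutative Noetherian ring, σ a finite type, m a monomial order on σ →₀ ℕ, and I an ideal of MvPolynomial σ R. For every term t : σ →₀ ℕ, the ideal C(t,I) of R equals the ideal of R generated by the union of the sets D(t',I) over all terms t' dividing t (i.e., t' ≤ t in σ →₀ ℕ). -/

import Mathlib

open MvPolynomial

/-- Head term of a polynomial with respect to a monomial order. -/
noncomputable def MonomialOrder.degree' {σ R : Type*} [CommSemiring R] (m : MonomialOrder σ)
    (p : MvPolynomial σ R) : σ →₀ ℕ :=
  m.toSyn.symm (p.support.sup fun s => m.toSyn s)

/-- Head coefficient of a polynomial with respect to a monomial order. -/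
noncomputable def MonomialOrder.leadCoeff {σ R : Type*} [CommSemiring R] (m : MonomialOrder σ)
    (p : MvPolynomial σ R) : R :=
  p.coeff (m.degree' p)

/-- The set of head monomials of an ideal, as pairs (coefficient, term). -/
def HD {σ R : Type*} [CommRing R] (m : MonomialOrder σ) (I : Ideal (MvPolynomial σ R)) :
    Set (R × (σ →₀ ℕ)) :=
  {ct | ∃ p ∈ I, p ≠ 0 ∧ m.degree' p = ct.2 ∧ m.leadCoeff p = ct.1}

/-- Divisibility of monomials, represented as pairs (coefficient, term). -/
def MonDvd {σ R : Type*} [CommRing R] (a b : R × (σ →₀ ℕ)) : Prop :=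
  a.1 ∣ b.1 ∧ a.2 ≤ b.2

/-- The divisibility-minimal monomials of a set of monomials: those not strictly divided
by any monomial of the set. -/
def MinMon {σ R : Type*} [CommRing R] (S : Set (R × (σ →₀ ℕ))) : Set (R × (σ →₀ ℕ)) :=
  {a ∈ S | ¬ ∃ b ∈ S, MonDvd b a ∧ ¬ MonDvd a b}

/-- The coefficients of the minimal head monomials with term dividing t. -/
def D {σ R : Type*} [CommRing R] (m : MonomialOrder σ) (I : Ideal (MvPolynomial σ R))
    (t : σ →₀ ℕ) : Set R :=
  {c : R | (c, t) ∈ MinMon (HD m I)}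

section Aux

variable {σ R : Type*} [CommSemiring R] (m : MonomialOrder σ)

lemma MonomialOrder.toSyn_degree_eq (p : MvPolynomial σ R) :
    m.toSyn (m.degree' p) = p.support.sup fun s => m.toSyn s := by
  simp [MonomialOrder.degree']

lemma MonomialOrder.le_degree' {p : MvPolynomial σ R} {v : σ →₀ ℕ} (hv : v ∈ p.support) :
    m.toSyn v ≤ m.toSyn (m.degree' p) := by
  rw [m.toSyn_degree_eq]; exact Finset.le_sup hv

lemma MonomialOrder.degree'_eq_of {p : MvPolynomial σ R} {u : σ →₀ ℕ}
    (h1 : p.coeff u ≠ 0) (h2 : ∀ v ∈ p.support, m.toSyn v ≤ m.toSyn u) :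
    m.degree' p = u := by
  apply m.toSyn.injective
  apply le_antisymm
  · rw [m.toSyn_degree_eq]
    exact Finset.sup_le h2
  · exact m.le_degree' (MvPolynomial.mem_support_iff.mpr h1)

lemma MonomialOrder.degree'_mem_support {p : MvPolynomial σ R} (hp : p ≠ 0) :
    m.degree' p ∈ p.support := by
  obtain ⟨b, hb, he⟩ := Finset.exists_mem_eq_sup p.support
    (MvPolynomial.support_nonempty.mpr hp) (fun s => m.toSyn s)
  have : m.degree' p = b := by
    rw [MonomialOrder.degree', he]; exact m.toSyn.symm_apply_apply b
  rwa [this]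

lemma MonomialOrder.leadCoeff_ne_zero {p : MvPolynomial σ R} (hp : p ≠ 0) :
    m.leadCoeff p ≠ 0 :=
  MvPolynomial.mem_support_iff.mp (m.degree'_mem_support hp)

end Aux

section HDlemmas

variable {σ R : Type*} [CommRing R] (m : MonomialOrder σ) (I : Ideal (MvPolynomial σ R))

/-- Shifting: multiplying by a monomial moves a head monomial from term `s` to term `t ≥ s`. -/
lemma HD_shift {c : R} {s t : σ →₀ ℕ} (h : (c, s) ∈ HD m I) (hst : s ≤ t) :
    (c, t) ∈ HD m I := by
  classical
  obtain ⟨p, hpI, hp0, hdeg, hlc⟩ := h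
  dsimp only at hdeg hlc
  have : Nontrivial R := nontrivial_of_ne _ _ (m.leadCoeff_ne_zero hp0)
  refine ⟨MvPolynomial.monomial (t - s) 1 * p, I.mul_mem_left _ hpI, ?_, ?_, ?_⟩
  · intro h0
    have : MvPolynomial.coeff ((t - s) + m.degree' p)
        (MvPolynomial.monomial (t - s) (1:R) * p) = m.leadCoeff p := by
      rw [MvPolynomial.coeff_monomial_mul, one_mul]; rfl
    rw [h0, MvPolynomial.coeff_zero] at this
    exact m.leadCoeff_ne_zero hp0 this.symm
  · have hd : m.degree' (MvPolynomial.monomial (t - s) (1:R) * p) = (t - s) + m.degree' p := by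
      apply m.degree'_eq_of
      · rw [MvPolynomial.coeff_monomial_mul, one_mul]
        exact m.leadCoeff_ne_zero hp0
      · intro v hv
        have := MvPolynomial.support_mul (MvPolynomial.monomial (t - s) (1:R)) p hv
        rw [MvPolynomial.support_monomial, if_neg (one_ne_zero (α := R))] at this
        obtain ⟨a, ha, b, hb, rfl⟩ := Finset.mem_add.mp this
        rw [Finset.mem_singleton] at ha
        subst ha
        rw [map_add, map_add]
        exact add_le_add (le_refl _) (m.le_degree' hb)
    rw [hd]
    simp only [hdeg]
    exact tsub_add_cancel_of_le hst
  · have hd : m.degree' (MvPolynomial.monomial (t - s) (1:R) * p) = (t - s) + m.degree' p := by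
      apply m.degree'_eq_of
      · rw [MvPolynomial.coeff_monomial_mul, one_mul]
        exact m.leadCoeff_ne_zero hp0
      · intro v hv
        have := MvPolynomial.support_mul (MvPolynomial.monomial (t - s) (1:R)) p hv
        rw [MvPolynomial.support_monomial, if_neg (one_ne_zero (α := R))] at this
        obtain ⟨a, ha, b, hb, rfl⟩ := Finset.mem_add.mp this
        rw [Finset.mem_singleton] at ha
        subst ha
        rw [map_add, map_add]
        exact add_le_add (le_refl _) (m.le_degree' hb)
    show (MvPolynomial.monomial (t - s) (1:R) * p).coeff _ = c
    rw [hd, MvPolynomial.coeff_monomial_mul, one_mul]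
    exact hlc

/-- `C(t, I)` as an ideal of `R`. -/
def Cideal (t : σ →₀ ℕ) : Ideal R where
  carrier := {c : R | c = 0 ∨ (c, t) ∈ HD m I}
  zero_mem' := Or.inl rfl
  add_mem' := by
    classical
    rintro a b (rfl | ⟨p, hpI, hp0, hpd, hpc⟩) hb
    · simpa using hb
    dsimp only at hpd hpc
    rcases hb with rfl | ⟨q, hqI, hq0, hqd, hqc⟩
    · exact Or.inr ⟨p, hpI, hp0, hpd, by simpa using hpc⟩
    dsimp only at hqd hqc
    by_cases hab : a + b = 0
    · exact Or.inl hab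
    refine Or.inr ⟨p + q, I.add_mem hpI hqI, ?_, ?_, ?_⟩
    · intro h0
      apply hab
      have h1 : p.coeff t = a := by rw [← hpd]; exact hpc
      have h2 : q.coeff t = b := by rw [← hqd]; exact hqc
      have : (p + q).coeff t = a + b := by rw [MvPolynomial.coeff_add, h1, h2]
      rw [h0, MvPolynomial.coeff_zero] at this
      exact this.symm
    · apply m.degree'_eq_of
      · have : (p + q).coeff t = a + b := by
          rw [MvPolynomial.coeff_add]
          have h1 : p.coeff t = a := by rw [← hpd]; exact hpc
          have h2 : q.coeff t = b := by rw [← hqd]; exact hqc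
          rw [h1, h2]
        rw [this]; exact hab
      · intro v hv
        rcases Finset.mem_union.mp (MvPolynomial.support_add hv) with h | h
        · exact le_trans (m.le_degree' h) (by rw [hpd])
        · exact le_trans (m.le_degree' h) (by rw [hqd])
    · have hd : m.degree' (p + q) = t := by
        apply m.degree'_eq_of
        · have : (p + q).coeff t = a + b := by
            rw [MvPolynomial.coeff_add]
            have h1 : p.coeff t = a := by rw [← hpd]; exact hpc
            have h2 : q.coeff t = b := by rw [← hqd]; exact hqc
            rw [h1, h2]
          rw [this]; exact hab
        · intro v hv
          rcases Finset.mem_union.mp (MvPolynomial.support_add hv) with h | h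
          · exact le_trans (m.le_degree' h) (by rw [hpd])
          · exact le_trans (m.le_degree' h) (by rw [hqd])
      show (p + q).coeff (m.degree' (p + q)) = a + b
      rw [hd, MvPolynomial.coeff_add]
      have h1 : p.coeff t = a := by rw [← hpd]; exact hpc
      have h2 : q.coeff t = b := by rw [← hqd]; exact hqc
      rw [h1, h2]
  smul_mem' := by
    rintro r a (rfl | ⟨p, hpI, hp0, hpd, hpc⟩)
    · simp
    dsimp only at hpd hpc
    by_cases hra : r * a = 0
    · exact Or.inl (by simpa using hra)
    refine Or.inr ⟨MvPolynomial.C r * p, I.mul_mem_left _ hpI, ?_, ?_, ?_⟩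
    · intro h0
      apply hra
      have : (MvPolynomial.C r * p).coeff t = r * a := by
        rw [MvPolynomial.coeff_C_mul]
        have h1 : p.coeff t = a := by rw [← hpd]; exact hpc
        rw [h1]
      rw [h0, MvPolynomial.coeff_zero] at this
      exact this.symm
    · apply m.degree'_eq_of
      · rw [MvPolynomial.coeff_C_mul]
        have h1 : p.coeff t = a := by rw [← hpd]; exact hpc
        rw [h1]; exact hra
      · intro v hv
        have : v ∈ p.support := by
          have := MvPolynomial.support_smul (a := r) (f := p)
          rw [MvPolynomial.smul_eq_C_mul] at this
          exact this hv
        exact le_trans (m.le_degree' this) (by rw [hpd])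
    · have hd : m.degree' (MvPolynomial.C r * p) = t := by
        apply m.degree'_eq_of
        · rw [MvPolynomial.coeff_C_mul]
          have h1 : p.coeff t = a := by rw [← hpd]; exact hpc
          rw [h1]; exact hra
        · intro v hv
          have : v ∈ p.support := by
            have := MvPolynomial.support_smul (a := r) (f := p)
            rw [MvPolynomial.smul_eq_C_mul] at this
            exact this hv
          exact le_trans (m.le_degree' this) (by rw [hpd])
      show (MvPolynomial.C r * p).coeff (m.degree' _) = r * a
      rw [hd, MvPolynomial.coeff_C_mul]
      have h1 : p.coeff t = a := by rw [← hpd]; exact hpc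
      rw [h1]

end HDlemmas

/-- Strict divisibility of monomials is well-founded over a Noetherian ring. -/
lemma wf_strictMonDvd {σ R : Type*} [CommRing R] [IsNoetherianRing R] [Finite σ] :
    WellFounded (fun a b : R × (σ →₀ ℕ) => MonDvd a b ∧ ¬ MonDvd b a) := by
  have h1 : WellFounded ((· < ·) : (Ideal R)ᵒᵈ → (Ideal R)ᵒᵈ → Prop) :=
    (wellFoundedGT (R := R) (M := R)).wf
  have h2 : WellFounded ((· < ·) : (σ →₀ ℕ) → (σ →₀ ℕ) → Prop) :=
    (Finsupp.wellFoundedLT' (α := σ) (N := ℕ)).wf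
  have hwf := h1.prod_lex h2
  apply Subrelation.wf (r := InvImage
      (Prod.Lex ((· < ·) : (Ideal R)ᵒᵈ → _ → Prop) ((· < ·) : (σ →₀ ℕ) → _ → Prop))
      (fun a : R × (σ →₀ ℕ) => (OrderDual.toDual (Ideal.span {a.1}), a.2)))
  · rintro a b ⟨⟨hdvd, hle⟩, hnd⟩
    have hspan : Ideal.span {b.1} ≤ Ideal.span {a.1} :=
      Ideal.span_singleton_le_span_singleton.mpr hdvd
    rcases eq_or_lt_of_le hspan with heq | hlt
    · have hdvd' : b.1 ∣ a.1 := Ideal.span_singleton_le_span_singleton.mp heq.ge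
      have hlt2 : a.2 < b.2 := by
        rcases lt_or_eq_of_le hle with h | h
        · exact h
        · exact absurd ⟨hdvd', h.ge⟩ hnd
      have : OrderDual.toDual (Ideal.span {a.1}) = OrderDual.toDual (Ideal.span {b.1}) := by
        rw [heq]
      show Prod.Lex _ _ (OrderDual.toDual (Ideal.span {a.1}), a.2)
        (OrderDual.toDual (Ideal.span {b.1}), b.2)
      rw [this]
      exact Prod.Lex.right _ hlt2
    · exact Prod.Lex.left _ _ hlt
  · exact InvImage.wf _ hwf

/-- C(t, I) is the ideal generated by the union of the D(t', I) for all terms t' dividing t. -/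
theorem C_eq_span_D {σ R : Type*} [CommRing R] [IsNoetherianRing R] [Finite σ]
    (m : MonomialOrder σ) (I : Ideal (MvPolynomial σ R)) (t : σ →₀ ℕ) :
    {c : R | c = 0 ∨ (c, t) ∈ HD m I} =
      (Ideal.span (⋃ t' ∈ {t' : σ →₀ ℕ | t' ≤ t}, D m I t') : Set R) := by
  apply Set.Subset.antisymm
  · -- hard direction
    have key : ∀ a : R × (σ →₀ ℕ), a ∈ HD m I → a.2 ≤ t →
        a.1 ∈ Ideal.span (⋃ t' ∈ {t' : σ →₀ ℕ | t' ≤ t}, D m I t') := by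
      intro a
      induction a using (wf_strictMonDvd (σ := σ) (R := R)).induction with
      | _ x ih =>
        intro hx hxt
        by_cases hmin : x ∈ MinMon (HD m I)
        · apply Ideal.subset_span
          apply Set.mem_biUnion (show x.2 ∈ {t' : σ →₀ ℕ | t' ≤ t} from hxt)
          show (x.1, x.2) ∈ MinMon (HD m I)
          rwa [Prod.mk.eta]
        · have : ∃ b ∈ HD m I, MonDvd b x ∧ ¬ MonDvd x b := by
            by_contra h
            exact hmin ⟨hx, h⟩
          obtain ⟨b, hbHD, hbd, hnd⟩ := this
          have hb1 := ih b ⟨hbd, hnd⟩ hbHD (le_trans hbd.2 hxt)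
          obtain ⟨k, hk⟩ := hbd.1
          rw [hk]
          exact Ideal.mul_mem_right k _ hb1
    rintro c (rfl | hc)
    · exact Ideal.zero_mem _
    · exact key (c, t) hc le_rfl
  · -- easy direction
    have : Ideal.span (⋃ t' ∈ {t' : σ →₀ ℕ | t' ≤ t}, D m I t') ≤ Cideal m I t := by
      rw [Ideal.span_le]
      rintro c hc
      obtain ⟨t', ht', hct'⟩ := Set.mem_iUnion₂.mp hc
      exact Or.inr (HD_shift m I hct'.1 ht')
    exact this
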